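/- Let P ≥ 1 and, for each j = 1,…,P, let l_j ≥ 1, let λ_{j1},…,λ_{jl_j} ∈ ℂ be pairwise distinct, let N_j ≥ l_j, and let Ξ_j ∈ ℂ^{l_j × N_j} have rank l_j. Set m = Σ_j l_j, let l be the number of distinct values among all λ_{jk} (over all j, k), let d ≥ m, let X♯ ∈ ℂ^{(d+1)×m} be the matrix of powers of the concatenated list of all λ_{jk}, and let D = blockdiag(Ξ₁,…,Ξ_P). Then the matrix X = X♯D ∈ ℂ^{(d+1) × ΣN_j} has rank exactly l. -/

import Mathlib

open Matrix

/-- With X♯ the matrix of powers of the concatenated frequencies λ_{jk}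
(pairwise distinct within each block), Ξ_j ∈ ℂ^{l_j × N_j} of rank l_j,
D = blockdiag(Ξ₁,…,Ξ_P), l the number of distinct values among all λ_{jk}, and
d ≥ Σ l_j: the matrix X = X♯·D has rank exactly l. -/
theorem block_pencil_rank (P : ℕ) (hP : 1 ≤ P)
    (lp : Fin P → ℕ) (hlp : ∀ j, 1 ≤ lp j)
    (lam : ∀ j : Fin P, Fin (lp j) → ℂ) (hinj : ∀ j, Function.Injective (lam j))
    (N : Fin P → ℕ) (hN : ∀ j, lp j ≤ N j)
    (Ξ : ∀ j : Fin P, Matrix (Fin (lp j)) (Fin (N j)) ℂ)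
    (hrank : ∀ j, (Ξ j).rank = lp j)
    (l : ℕ)
    (hl : l = (Finset.univ.image fun q : (j : Fin P) × Fin (lp j) => lam q.1 q.2).card)
    (d : ℕ) (hd : (∑ j, lp j) ≤ d)
    (Xs : Matrix (Fin (d + 1)) ((j : Fin P) × Fin (lp j)) ℂ)
    (hXs : ∀ t j k, Xs t ⟨j, k⟩ = lam j k ^ (t : ℕ)) :
    (Xs * Matrix.blockDiagonal' Ξ).rank = l := by
  classical
  -- Each Ξ j has surjective mulVecLin
  have hsurj : ∀ j, Function.Surjective (Ξ j).mulVecLin := by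
    intro j
    rw [← LinearMap.range_eq_top]
    apply Submodule.eq_top_of_finrank_eq
    have : (Ξ j).rank = lp j := hrank j
    rw [Matrix.rank] at this
    rw [this, Module.finrank_fin_fun]
  -- blockDiagonal' Ξ has surjective mulVecLin
  have hDsurj : Function.Surjective (Matrix.blockDiagonal' Ξ).mulVecLin := by
    intro w
    choose v hv using fun j => hsurj j (fun k => w ⟨j, k⟩)
    refine ⟨fun q => v q.1 q.2, ?_⟩
    funext jk
    obtain ⟨j, k⟩ := jk
    have : (Matrix.blockDiagonal' Ξ).mulVec (fun q => v q.1 q.2) ⟨j, k⟩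
        = ∑ j' : Fin P, ∑ i : Fin (N j'),
            Matrix.blockDiagonal' Ξ ⟨j, k⟩ ⟨j', i⟩ * v j' i := by
      rw [Matrix.mulVec, dotProduct, ← Finset.univ_sigma_univ, Finset.sum_sigma]
    rw [Matrix.mulVecLin_apply, this, Finset.sum_eq_single j]
    · have : ∑ i : Fin (N j), Matrix.blockDiagonal' Ξ ⟨j, k⟩ ⟨j, i⟩ * v j i
          = ∑ i : Fin (N j), Ξ j k i * v j i := by
        refine Finset.sum_congr rfl fun i _ => ?_
        rw [Matrix.blockDiagonal'_apply_eq]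
      rw [this]
      have := congrFun (hv j) k
      rwa [Matrix.mulVecLin_apply, Matrix.mulVec, dotProduct] at this
    · intro j' _ hj'
      apply Finset.sum_eq_zero
      intro i _
      rw [Matrix.blockDiagonal'_apply_ne Ξ _ _ (fun h => hj' h.symm), zero_mul]
    · intro h; exact absurd (Finset.mem_univ j) h
  -- rank (Xs * D) = rank Xs
  have hstep1 : (Xs * Matrix.blockDiagonal' Ξ).rank = Xs.rank := by
    rw [Matrix.rank, Matrix.rank, Matrix.mulVecLin_mul,
      LinearMap.range_comp_of_range_eq_top _ (LinearMap.range_eq_top.mpr hDsurj)]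
  -- The matrix of powers of the distinct values
  set S : Finset ℂ := Finset.univ.image (fun q : (j : Fin P) × Fin (lp j) => lam q.1 q.2)
    with hS
  set W : Matrix (Fin (d + 1)) {x // x ∈ S} ℂ :=
    Matrix.of (fun t s => (s : ℂ) ^ (t : ℕ)) with hW
  -- same column span
  have hspan : Set.range Xsᵀ = Set.range Wᵀ := by
    ext x
    constructor
    · rintro ⟨⟨j, k⟩, rfl⟩
      refine ⟨⟨lam j k, Finset.mem_image.mpr ⟨⟨j, k⟩, Finset.mem_univ _, rfl⟩⟩, ?_⟩
      funext t
      simp [hW, Matrix.transpose_apply, hXs t j k]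
    · rintro ⟨⟨s, hs⟩, rfl⟩
      obtain ⟨q, -, rfl⟩ := Finset.mem_image.mp hs
      refine ⟨q, ?_⟩
      funext t
      obtain ⟨j, k⟩ := q
      simp [hW, Matrix.transpose_apply, hXs t j k]
  have hstep2 : Xs.rank = W.rank := by
    rw [Matrix.rank_eq_finrank_span_cols, Matrix.rank_eq_finrank_span_cols,
      show Set.range Xs.col = Set.range W.col from hspan]
  -- l ≤ d + 1
  have hcard : S.card ≤ ∑ j, lp j := by
    calc S.card ≤ (Finset.univ : Finset ((j : Fin P) × Fin (lp j))).card :=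
          Finset.card_image_le
    _ = ∑ j, lp j := by simp [Finset.card_univ, Fintype.card_sigma]
  have hld : S.card ≤ d + 1 := le_trans (hcard.trans hd) (Nat.le_succ d)
  -- rows of Wᵀ are linearly independent
  have hli : LinearIndependent ℂ Wᵀ.row := by
    rw [Fintype.linearIndependent_iff]
    intro c hc
    set e : Fin S.card ≃ {x // x ∈ S} := S.equivFin.symm with he
    have hf : Function.Injective (fun i : Fin S.card => ((e i : ℂ))) :=
      fun a b hab => e.injective (Subtype.ext hab)
    have key : ∀ i : Fin S.card,
        (∑ j : Fin S.card, c (e j) * ((e j : ℂ)) ^ (i : ℕ)) = 0 := by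
      intro i
      have ht := congrFun hc (Fin.castLE hld i)
      simp only [Finset.sum_apply, Pi.smul_apply, smul_eq_mul, Pi.zero_apply,
        Matrix.row, Matrix.transpose_apply] at ht
      have := Equiv.sum_comp e
        (fun s : {x // x ∈ S} => c s * ((s : ℂ)) ^ ((Fin.castLE hld i : Fin (d+1)) : ℕ))
      exact this.trans ht
    have hv0 := Matrix.eq_zero_of_forall_pow_sum_mul_pow_eq_zero hf key
    intro s
    have := congrFun hv0 (e.symm s)
    simpa using this
  have hstep3 : W.rank = l := by
    rw [← Matrix.rank_transpose, hli.rank_matrix, Fintype.card_coe, hl]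
  rw [hstep1, hstep2, hstep3]
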